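/- Let N ≥ 2 and N/2 < K < N be integers, and let Q be the FEP generator matrix on Γ_{N,K}. The uniform probability measure π_{N,K} on ℰ_{N,K}, extended by 0 on Γ_{N,K} ∖ ℰ_{N,K} and viewed as a row vector, satisfies π_{N,K} · Q = 0; that is, for every η' ∈ Γ_{N,K}, Σ_{η ∈ Γ_{N,K}} π_{N,K}(η) Q(η,η') = 0. -/

import Mathlib

open scoped Classical BigOperators

noncomputable section

/-- A particle configuration on the discrete circle `ℤ/Mℤ`. -/
abbrev Conf (M : ℕ) := ZMod M → Bool

/-- Number of occupied sites (particles) of a configuration. -/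
def numParticles {M : ℕ} [NeZero M] (η : Conf M) : ℕ :=
  (Finset.univ.filter fun x => η x = true).card

/-- Ergodicity: every pair of neighbouring sites carries at least one particle. -/
def isErgodic {M : ℕ} (η : Conf M) : Prop :=
  ∀ x : ZMod M, η x = true ∨ η (x + 1) = true

/-- The configuration `η` with the values at `x` and `y` exchanged. -/
def swapConf {α : Type*} [DecidableEq α] (η : α → Bool) (x y : α) : α → Bool :=
  fun z => if z = x then η y else if z = y then η x else η z

/-- Number of pairs `(x, z)`, `z ∈ {−1, +1}`, with `η_{x−z} = η_x = 1`, `η_{x+z} = 0` and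
`η^{x,x+z} = η'`. -/
def jumpCount {N : ℕ} [NeZero N] (η η' : Conf N) : ℕ :=
  (Finset.univ.filter fun p : ZMod N × Bool =>
    letI x := p.1
    letI z : ZMod N := if p.2 then 1 else -1
    η (x - z) = true ∧ η x = true ∧ η (x + z) = false ∧ swapConf η x (x + z) = η').card

/-- The configurations with exactly `K` particles, as a type. -/
abbrev GammaT (N K : ℕ) [NeZero N] := {η : Conf N // numParticles η = K}

/-- The FEP generator, as a matrix indexed by `Γ_{N,K}`. -/
def genFEP (N K : ℕ) [NeZero N] : Matrix (GammaT N K) (GammaT N K) ℝ :=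
  fun η η' =>
    if η' = η then -(∑ η'' ∈ Finset.univ.filter (fun η'' => η'' ≠ η), (jumpCount η.1 η''.1 : ℝ))
    else (jumpCount η.1 η'.1 : ℝ)

/-- The distribution at time `t` of the FEP started from `η`:  the row `η` of `exp (t Q)`. -/
def Pt (N K : ℕ) [NeZero N] (t : ℝ) (η : GammaT N K) : GammaT N K → ℝ :=
  fun η' => NormedSpace.exp (t • genFEP N K) η η'

/-- Total variation distance between two (probability) vectors on a finite set. -/
def dTV {S : Type*} [Fintype S] (p q : S → ℝ) : ℝ :=
  (∑ s, |p s - q s|) / 2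

/-- The ergodic configurations with `K` particles, as a finset. -/
def ergoFinset (N K : ℕ) [NeZero N] : Finset (GammaT N K) :=
  Finset.univ.filter fun η => isErgodic η.1

/-- The uniform probability measure on `ℰ_{N,K}`, extended by `0`. -/
def piFEP (N K : ℕ) [NeZero N] : GammaT N K → ℝ :=
  fun η => if isErgodic η.1 then (1 : ℝ) / (ergoFinset N K).card else 0

/-- The `ε`-mixing time of the FEP on `ℤ/Nℤ` with `K` particles. -/
def mixingTime (N K : ℕ) (ε : ℝ) : ℝ :=
  if h : N = 0 then 0 else
    haveI : NeZero N := ⟨h⟩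
    sInf {t : ℝ | 0 ≤ t ∧ ∀ η : GammaT N K, dTV (Pt N K t η) (piFEP N K) ≤ ε}

/-- The `ε`-mixing time restricted to initial configurations in the ergodic component. -/
def ergoMixingTime (N K : ℕ) (ε : ℝ) : ℝ :=
  if h : N = 0 then 0 else
    haveI : NeZero N := ⟨h⟩
    sInf {t : ℝ | 0 ≤ t ∧ ∀ η : GammaT N K, isErgodic η.1 → dTV (Pt N K t η) (piFEP N K) ≤ ε}

/-- The `ε`-transience time: the time needed for the mass of the transient set to drop
below `ε`, uniformly over the initial configuration. -/
def transienceTime (N K : ℕ) (ε : ℝ) : ℝ :=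
  if h : N = 0 then 0 else
    haveI : NeZero N := ⟨h⟩
    sInf {t : ℝ | 0 ≤ t ∧ ∀ η : GammaT N K,
      ∑ η' ∈ Finset.univ.filter (fun η' : GammaT N K => ¬ isErgodic η'.1), Pt N K t η η' ≤ ε}

end

section Aux

variable {M : ℕ}

lemma swap_swap {α : Type*} [DecidableEq α] (η : α → Bool) (x y : α) :
    swapConf (swapConf η x y) y x = η := by
  funext w
  simp only [swapConf]
  split_ifs with hw1 hw2 hw3 hw4 <;> simp_all

lemma fepTwoNeZero (hM : 3 ≤ M) : (2 : ZMod M) ≠ 0 := by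
  have : ((2 : ℕ) : ZMod M) ≠ 0 := by
    rw [Ne, ZMod.natCast_eq_zero_iff]
    intro h
    have := Nat.le_of_dvd (by norm_num) h
    omega
  simpa using this

lemma fepOneNeZero (hM : 3 ≤ M) : (1 : ZMod M) ≠ 0 := by
  have : ((1 : ℕ) : ZMod M) ≠ 0 := by
    rw [Ne, ZMod.natCast_eq_zero_iff]
    intro h
    have := Nat.le_of_dvd (by norm_num) h
    omega
  simpa using this

/-- A legal FEP jump preserves ergodicity. -/
lemma ergodic_swap (hM : 3 ≤ M) (η : Conf M) (x z : ZMod M)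
    (hz : z = 1 ∨ z = -1) (hxz : η (x - z) = true) (hx : η x = true)
    (hpz : η (x + z) = false) (he : isErgodic η) :
    isErgodic (swapConf η x (x + z)) := by
  have h1 : (1 : ZMod M) ≠ 0 := fepOneNeZero hM
  have h2 : (2 : ZMod M) ≠ 0 := fepTwoNeZero hM
  intro y
  rcases hz with rfl | rfl
  · -- z = 1
    by_cases hyx : y = x
    · subst hyx
      right
      have hne : y + 1 ≠ y := fun h => h1 (by linear_combination h)
      simp [swapConf, hne, hx, h1, h2]
    · by_cases hyx1 : y + 1 = x
      · left
        have e1 : y ≠ x + 1 := fun h => h2 (by linear_combination hyx1 - h)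
        have : η y = true := by
          have : y = x - 1 := by linear_combination hyx1
          rw [this]; exact hxz
        simp [swapConf, hyx, e1, this, h1, h2]
      · rcases he y with hy | hy1
        · left
          by_cases hy2 : y = x + 1
          · simp [swapConf, hyx, hy2, hx, h1, h2]
          · simp [swapConf, hyx, hy2, hy, h1, h2]
        · right
          by_cases hy2 : y + 1 = x + 1
          · exact absurd (by linear_combination hy2) hyx
          · simp [swapConf, hyx1, hy2, hy1, h1, h2]
  · -- z = -1
    by_cases hyx : y = x
    · subst hyx
      right
      have e0 : y + 1 ≠ y := fun h => h1 (by linear_combination h)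
      have e1 : y + 1 ≠ y + -1 := fun h => h2 (by linear_combination h)
      have : η (y + 1) = true := by
        have : y + 1 = y - (-1) := by ring
        rw [this]; exact hxz
      simp [swapConf, e0, e1, this, h1, h2]
    · by_cases hyx1 : y + 1 = x
      · left
        have e1 : y = x + -1 := by linear_combination hyx1
        have e2 : y ≠ x := hyx
        simp [swapConf, e2, e1, hx, h1, h2]
      · rcases he y with hy | hy1
        · left
          by_cases hy2 : y = x + -1
          · simp [swapConf, hyx, hy2, hx, h1, h2]
          · simp [swapConf, hyx, hy2, hy, h1, h2]
        · right
          by_cases hy2 : y + 1 = x + -1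
          · simp [swapConf, hyx1, hy2, hx, h1, h2]
          · simp [swapConf, hyx1, hy2, hy1, h1, h2]

/-- Jumps from an ergodic configuration cannot leave the ergodic component. -/
lemma jumpCount_eq_zero [NeZero M] (hM : 3 ≤ M) (η ν : Conf M)
    (he : isErgodic η) (hn : ¬ isErgodic ν) : jumpCount η ν = 0 := by
  rw [jumpCount, Finset.card_eq_zero, Finset.filter_eq_empty_iff]
  rintro ⟨x, b⟩ -
  rintro ⟨hc1, hc2, hc3, hc4⟩
  have hz : (if b then (1 : ZMod M) else -1) = 1 ∨ (if b then (1 : ZMod M) else -1) = -1 := by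
    cases b <;> simp
  exact hn (hc4 ▸ ergodic_swap hM η x _ hz hc1 hc2 hc3 he)

/-- The reversed-jump conditions. -/
lemma jump_rev [NeZero M] (hM : 3 ≤ M) (η ν : Conf M) (he : isErgodic η)
    (x z : ZMod M) (hz : z = 1 ∨ z = -1)
    (hc1 : η (x - z) = true) (hc2 : η x = true) (hc3 : η (x + z) = false)
    (hc4 : swapConf η x (x + z) = ν) :
    ν ((x + z) - (-z)) = true ∧ ν (x + z) = true ∧ ν ((x + z) + (-z)) = false ∧
      swapConf ν (x + z) ((x + z) + (-z)) = η := by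
  have h1 : (1 : ZMod M) ≠ 0 := fepOneNeZero hM
  have h2 : (2 : ZMod M) ≠ 0 := fepTwoNeZero hM
  have hz0 : z ≠ 0 := by
    rcases hz with rfl | rfl
    · exact h1
    · intro h; exact h1 (by linear_combination -h)
  have h2z : z + z ≠ 0 := by
    rcases hz with rfl | rfl
    · intro h; exact h2 (by linear_combination h)
    · intro h; exact h2 (by linear_combination -h)
  have hxz_ne : x + z ≠ x := fun h => hz0 (by linear_combination h)
  have ex : (x + z) + (-z) = x := by ring
  have e2z : (x + z) - (-z) = x + (z + z) := by ring
  subst hc4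
  refine ⟨?_, ?_, ?_, ?_⟩
  · rw [e2z]
    have ne1 : x + (z + z) ≠ x := fun h => h2z (by linear_combination h)
    have ne2 : x + (z + z) ≠ x + z := fun h => hz0 (by linear_combination h)
    have : η (x + (z + z)) = true := by
      rcases hz with rfl | rfl
      · rcases he (x + 1) with h | h
        · rw [h] at hc3; exact absurd hc3 (by simp)
        · have e : x + 1 + 1 = x + (1 + 1) := by ring
          rwa [e] at h
      · rcases he (x + (-1 + -1)) with h | h
        · exact h
        · have e : x + (-1 + -1) + 1 = x + -1 := by ring
          rw [e] at h; rw [h] at hc3; exact absurd hc3 (by simp)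
    simp [swapConf, ne1, ne2, this]
  · simp [swapConf, hxz_ne, hc2]
  · rw [ex]; simp [swapConf, hc3]
  · rw [ex]; exact swap_swap η x (x + z)

/-- For an ergodic source, the jump count is dominated by the reverse jump count. -/
lemma jumpCount_le [NeZero M] (hM : 3 ≤ M) (η ν : Conf M) (he : isErgodic η) :
    jumpCount η ν ≤ jumpCount ν η := by
  rw [jumpCount, jumpCount]
  apply Finset.card_le_card_of_injOn
    (fun p : ZMod M × Bool => (p.1 + (if p.2 then 1 else -1), !p.2))
  · rintro ⟨x, b⟩ hp
    simp only [Finset.mem_coe, Finset.mem_filter, Finset.mem_univ, true_and] at hp ⊢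
    obtain ⟨hc1, hc2, hc3, hc4⟩ := hp
    set z : ZMod M := if b then 1 else -1 with hzdef
    have hz : z = 1 ∨ z = -1 := by rw [hzdef]; cases b <;> simp
    have hz' : (if !b then (1 : ZMod M) else -1) = -z := by
      rw [hzdef]; cases b <;> norm_num
    obtain ⟨r1, r2, r3, r4⟩ := jump_rev hM η ν he x z hz hc1 hc2 hc3 hc4
    rw [hz']
    exact ⟨r1, r2, r3, r4⟩
  · rintro ⟨x, b⟩ h1 ⟨x', b'⟩ h2 heq
    simp only [Prod.mk.injEq] at heq
    obtain ⟨he1, he2⟩ := heq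
    have hb : b = b' := by
      cases b <;> cases b' <;> simp_all
    subst hb
    have hx : x = x' := add_right_cancel he1
    simp [hx]

/-- Symmetry of the jump counts on the ergodic component. -/
lemma jumpCount_symm [NeZero M] (hM : 3 ≤ M) (η ν : Conf M)
    (he : isErgodic η) (hv : isErgodic ν) : jumpCount η ν = jumpCount ν η :=
  le_antisymm (jumpCount_le hM η ν he) (jumpCount_le hM ν η hv)

end Aux

/-- **The uniform measure on the ergodic component is invariant for the FEP.**
For `N ≥ 2` and `N/2 < K < N`, the uniform probability measure on `ℰ_{N,K}`, extended by `0`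
on `Γ_{N,K} ∖ ℰ_{N,K}`, is a left null vector of the generator `Q`:  for every `η'`,
`Σ_η π_{N,K}(η) Q(η,η') = 0`. -/
theorem fep_uniform_ergodic_invariant
    (N K : ℕ) [NeZero N] (hN : 2 ≤ N) (h1 : N < 2 * K) (h2 : K < N)
    (η' : GammaT N K) :
    ∑ η : GammaT N K, piFEP N K η * genFEP N K η η' = 0 := by
  have hN3 : 3 ≤ N := by omega
  classical
  set E := ergoFinset N K with hE
  have key : ∑ η ∈ E, genFEP N K η η' = 0 := by
    by_cases hη' : isErgodic η'.1
    · have hη'E : η' ∈ E := by simp [hE, ergoFinset, hη']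
      rw [← Finset.add_sum_erase E _ hη'E]
      have hdiag : genFEP N K η' η' =
          -(∑ η'' ∈ Finset.univ.filter (fun η'' => η'' ≠ η'), (jumpCount η'.1 η''.1 : ℝ)) := by
        simp [genFEP]
      have hrest : ∀ η ∈ E.erase η', genFEP N K η η' = (jumpCount η.1 η'.1 : ℝ) := by
        intro η hη
        have hne : η' ≠ η := (Finset.ne_of_mem_erase hη).symm
        simp [genFEP, hne]
      rw [Finset.sum_congr rfl hrest, hdiag]
      have hsub : ∑ η'' ∈ Finset.univ.filter (fun η'' => η'' ≠ η'), (jumpCount η'.1 η''.1 : ℝ)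
          = ∑ η'' ∈ E.erase η', (jumpCount η'.1 η''.1 : ℝ) := by
        symm
        apply Finset.sum_subset
        · intro a ha
          simp only [Finset.mem_filter, Finset.mem_univ, true_and]
          exact (Finset.mem_erase.mp ha).1
        · intro a ha hna
          have h1 : a ≠ η' := (Finset.mem_filter.mp ha).2
          have h2 : ¬ isErgodic a.1 := by
            intro h
            exact hna (Finset.mem_erase.mpr ⟨h1, by simp [hE, ergoFinset, h]⟩)
          exact_mod_cast congrArg (Nat.cast : ℕ → ℝ)
            (jumpCount_eq_zero hN3 η'.1 a.1 hη' h2)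
      rw [hsub]
      have hsym : ∀ η ∈ E.erase η',
          (jumpCount η'.1 η.1 : ℝ) = (jumpCount η.1 η'.1 : ℝ) := by
        intro η hη
        have hηE : isErgodic η.1 := by
          have := Finset.mem_of_mem_erase hη
          simpa [hE, ergoFinset] using this
        exact_mod_cast congrArg (Nat.cast : ℕ → ℝ)
          (jumpCount_symm hN3 η'.1 η.1 hη' hηE)
      rw [Finset.sum_congr rfl hsym]
      ring
    · apply Finset.sum_eq_zero
      intro η hη
      have hηe : isErgodic η.1 := by simpa [hE, ergoFinset] using hη
      have hne : η' ≠ η := by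
        rintro rfl
        exact hη' hηe
      simp [genFEP, hne, jumpCount_eq_zero hN3 η.1 η'.1 hηe hη']
  have step : ∑ η : GammaT N K, piFEP N K η * genFEP N K η η'
      = (1 / ((ergoFinset N K).card : ℝ)) * ∑ η ∈ E, genFEP N K η η' := by
    rw [Finset.mul_sum, hE, ergoFinset, Finset.sum_filter]
    apply Finset.sum_congr rfl
    intro η _
    by_cases h : isErgodic η.1 <;> simp [piFEP, h, ergoFinset]
  rw [step, key, mul_zero]
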